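/- Let X be a finite subset of the unit circle in ℂ with |X| = 4 such that A(X) = {conj(x)·y : x ≠ y in X} is contained in {a, b, x₀+iy₀, x₀−iy₀} with a ≠ b real and y₀ ≠ 0 real. Then there exists a unimodular constant c such that cX = {1, −1, i, −i}. -/

import Mathlib

lemma unimod_mul_conj {z : ℂ} (h : ‖z‖ = 1) : z * (starRingEnd ℂ) z = 1 := by
  rw [Complex.mul_conj]
  norm_cast
  rw [Complex.normSq_eq_norm_sq, h]; norm_num

/-- If `X` is a 4-element set on the complex unit circle whose pairwise Hermitian products
`conj(x)·y` (for distinct `x,y`) lie in `{a, b, x₀+iy₀, x₀−iy₀}` with `a ≠ b` real and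
`y₀ ≠ 0` real, then some rotation of `X` equals `{1, −1, i, −i}`. -/
theorem stmt_8 (X : Finset ℂ) (hX : ∀ z ∈ X, ‖z‖ = 1)
    (a b x₀ y₀ : ℝ) (hab : a ≠ b) (hy : y₀ ≠ 0)
    (hA : ∀ x ∈ X, ∀ y ∈ X, x ≠ y →
      (starRingEnd ℂ x) * y ∈
        ({(a : ℂ), (b : ℂ), (x₀ : ℂ) + (y₀ : ℂ) * Complex.I,
          (x₀ : ℂ) - (y₀ : ℂ) * Complex.I} : Set ℂ))
    (hcard : X.card = 4) :
    ∃ c : ℂ, ‖c‖ = 1 ∧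
      X.image (fun x => c * x) = ({1, -1, Complex.I, -Complex.I} : Finset ℂ) := by
  have hpos : 0 < X.card := by omega
  obtain ⟨x1, hx1⟩ := Finset.card_pos.mp hpos
  have hx1a : ‖x1‖ = 1 := hX x1 hx1
  set c : ℂ := starRingEnd ℂ x1 with hc
  have hca : ‖c‖ = 1 := by simpa [hc] using hx1a
  refine ⟨c, hca, ?_⟩
  have hc0 : c ≠ 0 := by
    intro h; rw [h] at hca; simp at hca
  set w : ℂ := (x₀ : ℂ) + (y₀ : ℂ) * Complex.I with hw
  set w' : ℂ := (x₀ : ℂ) - (y₀ : ℂ) * Complex.I with hw'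
  set T : Finset ℂ := {1, -1, w, w'} with hT
  set Y : Finset ℂ := X.image (fun x => c * x) with hY
  have hYcard : Y.card = 4 := by
    rw [hY, Finset.card_image_of_injective _ (mul_right_injective₀ hc0), hcard]
  have hreal : ∀ r : ℝ, ‖(r : ℂ)‖ = 1 → (r : ℂ) = 1 ∨ (r : ℂ) = -1 := by
    intro r hr
    rw [Complex.norm_real, Real.norm_eq_abs] at hr
    rcases (abs_eq (le_of_lt one_pos)).mp hr with h | h
    · left; rw [h]; norm_num
    · right; rw [h]; norm_num
  have hx1c : c * x1 = 1 := by
    rw [hc, mul_comm]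
    exact unimod_mul_conj hx1a
  have hprod1 : ∀ x ∈ X, ∀ y ∈ X, x ≠ y → (starRingEnd ℂ x) * y ≠ 1 := by
    intro x hxm y hym hxy h
    apply hxy
    have h2 : x * ((starRingEnd ℂ x) * y) = x * 1 := by rw [h]
    rw [← mul_assoc, unimod_mul_conj (hX x hxm), one_mul, mul_one] at h2
    exact h2.symm
  have hYsub : Y ⊆ T := by
    intro z hz
    rw [hY, Finset.mem_image] at hz
    obtain ⟨x, hxm, rfl⟩ := hz
    by_cases hx : x = x1
    · subst hx
      rw [hx1c, hT]
      simp
    · have hmem := hA x1 hx1 x hxm (fun h => hx h.symm)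
      have habs : ‖(starRingEnd ℂ x1) * x‖ = 1 := by
        rw [norm_mul, Complex.norm_conj, hx1a, hX x hxm, one_mul]
      have hne1 : (starRingEnd ℂ x1) * x ≠ 1 := hprod1 x1 hx1 x hxm (fun h => hx h.symm)
      have hcx : c * x = starRingEnd ℂ x1 * x := by rw [hc]
      simp only [Set.mem_insert_iff, Set.mem_singleton_iff] at hmem
      rcases hmem with h | h | h | h
      · rw [h] at habs
        rcases hreal a habs with h1 | h1
        · exact absurd (h.trans h1) hne1
        · rw [hT]; rw [hcx, h, h1]; simp
      · rw [h] at habs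
        rcases hreal b habs with h1 | h1
        · exact absurd (h.trans h1) hne1
        · rw [hT]; rw [hcx, h, h1]; simp
      · rw [hT]; rw [hcx, h]; simp
      · rw [hT]; rw [hcx, h]; simp
  have hTcard : T.card ≤ 4 := by
    rw [hT]
    refine le_trans (Finset.card_insert_le _ _) ?_
    have h2 := Finset.card_insert_le (-1 : ℂ) {w, w'}
    have h3 := Finset.card_insert_le w {w'}
    have h4 : ({w'} : Finset ℂ).card = 1 := Finset.card_singleton _
    omega
  have hYT : Y = T := Finset.eq_of_subset_of_card_le hYsub (by omega)
  -- extract elements mapping to -1 and w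
  have hm1 : (-1 : ℂ) ∈ Y := by rw [hYT, hT]; simp
  have hwY : w ∈ Y := by rw [hYT, hT]; simp
  rw [hY, Finset.mem_image] at hm1 hwY
  obtain ⟨xm, hxmm, hcxm⟩ := hm1
  obtain ⟨xw, hxwm, hcxw⟩ := hwY
  have hwne : w ≠ -1 := by
    intro h
    apply hy
    have := congrArg Complex.im h
    simpa [hw] using this
  have hne : xw ≠ xm := by
    intro h
    apply hwne
    rw [← hcxw, h, hcxm]
  have hcc : (starRingEnd ℂ) c * c = 1 := by
    rw [mul_comm]; exact unimod_mul_conj hca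
  have h2 : ((starRingEnd ℂ) c * c) * ((starRingEnd ℂ) xw * xm) =
      (starRingEnd ℂ) (c * xw) * (c * xm) := by
    rw [map_mul]; ring
  rw [hcxw, hcxm, hcc, one_mul] at h2
  have hconjw : (starRingEnd ℂ) w = w' := by
    rw [hw, hw']
    simp [map_add, map_mul, Complex.conj_ofReal, Complex.conj_I]
    ring
  rw [hconjw] at h2
  have hmem2 := hA xw hxwm xm hxmm hne
  rw [h2] at hmem2
  simp only [Set.mem_insert_iff, Set.mem_singleton_iff] at hmem2
  have hx0 : x₀ = 0 := by
    rcases hmem2 with h | h | h | h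
    · exfalso; apply hy
      have := congrArg Complex.im h
      simpa [hw'] using this
    · exfalso; apply hy
      have := congrArg Complex.im h
      simpa [hw'] using this
    · have := congrArg Complex.re h
      simp [hw, hw'] at this
      linarith
    · exfalso; apply hy
      have := congrArg Complex.im h
      simp [hw'] at this
      linarith
  have hwabs : ‖w‖ = 1 := by
    rw [← hcxw, norm_mul, hca, hX xw hxwm]
    norm_num
  have hy1 : y₀ = 1 ∨ y₀ = -1 := by
    rw [hw, hx0] at hwabs
    simp [Complex.norm_def, Complex.normSq_apply] at hwabs
    exact (abs_eq (le_of_lt one_pos)).mp hwabs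
  rcases hy1 with h1 | h1
  · have hwI : w = Complex.I := by rw [hw, hx0, h1]; simp
    have hw'I : w' = -Complex.I := by rw [hw', hx0, h1]; simp
    rw [hYT, hT, hwI, hw'I]
  · have hwI : w = -Complex.I := by rw [hw, hx0, h1]; simp
    have hw'I : w' = Complex.I := by rw [hw', hx0, h1]; simp
    rw [hYT, hT, hwI, hw'I, Finset.pair_comm]
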